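/- Let c, C₁, P₀ ∈ ℝ and let Z : ℝ → ℝ be three times differentiable with Z(r) ≠ 0 for all r. Define v₁ = c + C₁/Z, P = P₀ + Z − (C₁²/(6Z²))(2 Z Z″ − (Z′)² + 3), and G₁ = (v₁ − c)v₁″ − (v₁′)². Then for all r ∈ ℝ: (v₁(r) − c)·v₁′(r) − Z′(r) + P′(r) − Z(r)·Z′(r)·G₁(r) − (1/3)·Z(r)²·G₁′(r) = 0. -/

import Mathlib

/-- Upper-layer traveling-wave velocity v₁ = c + C₁/Z. -/
noncomputable def v1f (c C₁ : ℝ) (Z : ℝ → ℝ) : ℝ → ℝ := fun r => c + C₁ / Z r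

/-- Pressure integral P = P₀ + Z − (C₁²/(6Z²))(2ZZ″ − (Z′)² + 3). -/
noncomputable def Pf (P₀ C₁ : ℝ) (Z : ℝ → ℝ) : ℝ → ℝ := fun r =>
  P₀ + Z r - (C₁ ^ 2 / (6 * (Z r) ^ 2)) *
    (2 * Z r * deriv (deriv Z) r - (deriv Z r) ^ 2 + 3)

/-- G₁ = (v₁ − c)v₁″ − (v₁′)². -/
noncomputable def G1f (c C₁ : ℝ) (Z : ℝ → ℝ) : ℝ → ℝ := fun r =>
  (v1f c C₁ Z r - c) * deriv (deriv (v1f c C₁ Z)) r - (deriv (v1f c C₁ Z) r) ^ 2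

theorem stmt5 (c C₁ P₀ : ℝ) (Z : ℝ → ℝ)
    (hZ : Differentiable ℝ Z) (hZ' : Differentiable ℝ (deriv Z))
    (hZ'' : Differentiable ℝ (deriv (deriv Z)))
    (hZ0 : ∀ r : ℝ, Z r ≠ 0) :
    ∀ r : ℝ,
      (v1f c C₁ Z r - c) * deriv (v1f c C₁ Z) r - deriv Z r + deriv (Pf P₀ C₁ Z) r
        - Z r * deriv Z r * G1f c C₁ Z r
        - (1/3) * (Z r) ^ 2 * deriv (G1f c C₁ Z) r = 0 := by
  have hE1 : deriv (v1f c C₁ Z) = fun r => -(C₁ * deriv Z r) / Z r ^ 2 := by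
    funext r
    have h : HasDerivAt (v1f c C₁ Z)
        ((0 * Z r - C₁ * deriv Z r) / Z r ^ 2) r :=
      ((hasDerivAt_const r C₁).div ((hZ r).hasDerivAt) (hZ0 r)).const_add c
    rw [h.deriv]; ring
  have hE2 : deriv (deriv (v1f c C₁ Z)) =
      fun r => -(C₁ * (deriv (deriv Z) r * Z r - 2 * deriv Z r ^ 2)) / Z r ^ 3 := by
    funext r
    rw [hE1]
    have h := ((((hZ' r).hasDerivAt).const_mul C₁).neg.div
      (((hZ r).hasDerivAt).pow 2) (pow_ne_zero 2 (hZ0 r)))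
    erw [h.deriv]
    simp only [Pi.pow_apply, Pi.neg_apply, Pi.sub_apply, Pi.mul_apply, Pi.add_apply]
    have hz := hZ0 r
    field_simp
    ring
  have hE3 : G1f c C₁ Z = fun r =>
      -(C₁ ^ 2 * (Z r * deriv (deriv Z) r - deriv Z r ^ 2)) / Z r ^ 4 := by
    funext r
    have hz := hZ0 r
    simp only [G1f]
    rw [hE2, hE1]
    simp only [v1f]
    field_simp
    ring
  intro r
  have hz := hZ0 r
  -- derivative of G1f
  have hG1' : deriv (G1f c C₁ Z) r =
      -(C₁ ^ 2 * ((Z r * deriv (deriv (deriv Z)) r - deriv Z r * deriv (deriv Z) r) * Z r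
        - 4 * deriv Z r * (Z r * deriv (deriv Z) r - deriv Z r ^ 2))) / Z r ^ 5 := by
    rw [hE3]
    have h := (((((hZ r).hasDerivAt.mul (hZ'' r).hasDerivAt).sub
        ((hZ' r).hasDerivAt.pow 2)).const_mul (C₁ ^ 2)).neg.div
        (((hZ r).hasDerivAt).pow 4) (pow_ne_zero 4 (hZ0 r)))
    erw [h.deriv]
    simp only [Pi.pow_apply, Pi.neg_apply, Pi.sub_apply, Pi.mul_apply, Pi.add_apply]
    field_simp
    ring
  -- derivative of Pf
  have hP' : deriv (Pf P₀ C₁ Z) r =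
      deriv Z r - (C₁ ^ 2 / 3) *
        (Z r ^ 2 * deriv (deriv (deriv Z)) r
          - deriv Z r * (2 * Z r * deriv (deriv Z) r - deriv Z r ^ 2 + 3)) / Z r ^ 3 := by
    have hA : HasDerivAt (fun r => C₁ ^ 2 / (6 * Z r ^ 2))
        ((0 * (6 * Z r ^ 2) - C₁ ^ 2 * (6 * (2 * Z r ^ 1 * deriv Z r))) / (6 * Z r ^ 2) ^ 2) r :=
      (hasDerivAt_const r (C₁ ^ 2)).div ((((hZ r).hasDerivAt).pow 2).const_mul 6)
        (by simp [pow_ne_zero, hz])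
    have hN := ((((hZ r).hasDerivAt.const_mul 2).mul (hZ'' r).hasDerivAt).sub
        ((hZ' r).hasDerivAt.pow 2)).add_const 3
    have h := (((hZ r).hasDerivAt).const_add P₀).sub (hA.mul hN)
    rw [show Pf P₀ C₁ Z = fun r => P₀ + Z r - (C₁ ^ 2 / (6 * Z r ^ 2)) *
      (2 * Z r * deriv (deriv Z) r - (deriv Z r) ^ 2 + 3) from rfl]
    erw [h.deriv]
    simp only [Pi.pow_apply, Pi.neg_apply, Pi.sub_apply, Pi.mul_apply, Pi.add_apply]
    field_simp
    ring
  rw [hG1', hP']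
  simp only [hE1, hE3, v1f]
  field_simp
  ring
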